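/- Let G and H be connected weighted graphs on the same vertex set of size n, with Laplacians L_G and L_H. Then L_G ⪯ st_H(G) · L_H, where st_H(G) = Tr(L_H⁺ L_G) is the generalized stretch of G with respect to H. -/

import Mathlib

open Matrix

/-- The four Penrose conditions characterizing the Moore–Penrose pseudoinverse `P` of a real
matrix `A`. -/
def IsMoorePenrose {ι : Type*} [Fintype ι] (A P : Matrix ι ι ℝ) : Prop :=
  A * P * A = A ∧ P * A * P = P ∧ (A * P)ᵀ = A * P ∧ (P * A)ᵀ = P * A

/-- The Laplacian of a connected weighted graph: symmetric, nonpositive off-diagonal entries,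
zero row sums, and kernel spanned by the all-ones vector. -/
def IsConnLaplacian {ι : Type*} [Fintype ι] (M : Matrix ι ι ℝ) : Prop :=
  M.IsSymm ∧ (∀ i j, i ≠ j → M i j ≤ 0) ∧ (∀ i, ∑ j, M i j = 0) ∧
    ∀ x : ι → ℝ, M.mulVec x = 0 ↔ ∃ c : ℝ, x = fun _ => c

/-- Uniqueness of the Moore–Penrose pseudoinverse. -/
lemma moorePenrose_unique {ι : Type*} [Fintype ι] [DecidableEq ι]
    {A P Q : Matrix ι ι ℝ} (hP : IsMoorePenrose A P) (hQ : IsMoorePenrose A Q) : P = Q := by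
  obtain ⟨hP1, hP2, hP3, hP4⟩ := hP
  obtain ⟨hQ1, hQ2, hQ3, hQ4⟩ := hQ
  have hAP : A * P = A * Q := by
    calc A * P = (A * Q * A) * P := by rw [hQ1]
    _ = (A * Q) * (A * P) := mul_assoc _ _ _
    _ = (A * Q)ᵀ * (A * P)ᵀ := by rw [hQ3, hP3]
    _ = Qᵀ * (A * P * A)ᵀ := by simp [transpose_mul, mul_assoc]
    _ = Qᵀ * Aᵀ := by rw [hP1]
    _ = (A * Q)ᵀ := by rw [transpose_mul]
    _ = A * Q := hQ3
  have hPA : P * A = Q * A := by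
    calc P * A = P * (A * Q * A) := by rw [hQ1]
    _ = (P * A) * (Q * A) := by noncomm_ring
    _ = (P * A)ᵀ * (Q * A)ᵀ := by rw [hQ4, hP4]
    _ = (A * P * A)ᵀ * Qᵀ := by simp [transpose_mul, mul_assoc]
    _ = Aᵀ * Qᵀ := by rw [hP1]
    _ = (Q * A)ᵀ := by rw [transpose_mul]
    _ = Q * A := hQ4
  calc P = P * A * P := hP2.symm
  _ = P * (A * Q) := by rw [← hAP, mul_assoc]
  _ = (P * A) * Q := (mul_assoc _ _ _).symm
  _ = Q * A * Q := by rw [hPA]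
  _ = Q := hQ2

/-- The Moore–Penrose pseudoinverse of a symmetric matrix is symmetric. -/
lemma moorePenrose_symm {ι : Type*} [Fintype ι] [DecidableEq ι]
    {A P : Matrix ι ι ℝ} (hA : Aᵀ = A) (hP : IsMoorePenrose A P) : Pᵀ = P := by
  obtain ⟨h1, h2, h3, h4⟩ := hP
  have hT : IsMoorePenrose A Pᵀ := by
    refine ⟨?_, ?_, ?_, ?_⟩
    · calc A * Pᵀ * A = Aᵀ * Pᵀ * Aᵀ := by rw [hA]
      _ = (A * P * A)ᵀ := by simp [transpose_mul, mul_assoc]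
      _ = Aᵀ := by rw [h1]
      _ = A := hA
    · calc Pᵀ * A * Pᵀ = Pᵀ * Aᵀ * Pᵀ := by rw [hA]
      _ = (P * A * P)ᵀ := by simp [transpose_mul, mul_assoc]
      _ = Pᵀ := by rw [h2]
    · have hthis : A * Pᵀ = (P * A)ᵀ := by rw [transpose_mul, hA]
      rw [hthis, transpose_transpose, h4]
    · have hthis : Pᵀ * A = (A * P)ᵀ := by rw [transpose_mul, hA]
      rw [hthis, transpose_transpose, h3]
  exact moorePenrose_unique hT ⟨h1, h2, h3, h4⟩

/-- A symmetric matrix with zero row sums and nonpositive off-diagonal entries has nonnegative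
quadratic form. -/
lemma laplacian_quad_nonneg {ι : Type*} [Fintype ι] [DecidableEq ι]
    {L : Matrix ι ι ℝ} (hsym : L.IsSymm) (hoff : ∀ i j, i ≠ j → L i j ≤ 0)
    (hrow : ∀ i, ∑ j, L i j = 0) (x : ι → ℝ) : 0 ≤ x ⬝ᵥ L *ᵥ x := by
  have happ : ∀ i j, L j i = L i j := fun i j => by
    conv_lhs => rw [← hsym]
    rfl
  have hcol : ∀ j, ∑ i, L i j = 0 := by
    intro j
    calc ∑ i, L i j = ∑ i, L j i := by simp_rw [happ]
    _ = 0 := hrow j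
  have key : ∑ i, ∑ j, (-L i j) * (x i - x j)^2 = 2 * (x ⬝ᵥ L *ᵥ x) := by
    have e1 : ∀ i : ι, ∀ j : ι, (-L i j) * (x i - x j)^2 =
        L i j * (-(x i)^2) + L i j * (-(x j)^2) + 2 * (x i * (L i j * x j)) := by
      intros; ring
    simp_rw [e1, Finset.sum_add_distrib, ← Finset.sum_mul, ← Finset.mul_sum]
    rw [Finset.sum_comm (f := fun i j => L i j * (-(x j)^2))]
    simp_rw [← Finset.sum_mul, hrow, hcol, zero_mul, Finset.sum_const_zero]
    simp [dotProduct, mulVec, Finset.mul_sum]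
  have hnn : 0 ≤ ∑ i, ∑ j, (-L i j) * (x i - x j)^2 := by
    apply Finset.sum_nonneg; intro i _
    apply Finset.sum_nonneg; intro j _
    rcases eq_or_ne i j with rfl | hij
    · simp
    · exact mul_nonneg (by linarith [hoff i j hij]) (sq_nonneg _)
  linarith [key ▸ hnn]

/-- For a PSD real matrix, the quadratic form is bounded by the trace times the norm squared. -/
lemma quad_le_trace_mul {ι : Type*} [Fintype ι] [DecidableEq ι]
    {M : Matrix ι ι ℝ} (hM : M.PosSemidef) (x : ι → ℝ) :
    x ⬝ᵥ M *ᵥ x ≤ M.trace * (x ⬝ᵥ x) := by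
  open scoped MatrixOrder in set C := CFC.sqrt M with hCdef
  have hCC : C * C = M := by
    open scoped MatrixOrder in exact CFC.sqrt_mul_sqrt_self M hM.nonneg
  have hCsym : Cᵀ = C := by
    have : C.IsHermitian := by
      open scoped MatrixOrder in exact (CFC.sqrt_nonneg M).posSemidef.isHermitian
    rwa [IsHermitian, conjTranspose_eq_transpose_of_trivial] at this
  have hquad : x ⬝ᵥ M *ᵥ x = ∑ i, (∑ j, C i j * x j)^2 := by
    rw [← hCC, ← mulVec_mulVec, dotProduct_mulVec, ← mulVec_transpose, hCsym]
    simp [dotProduct, mulVec, sq]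
  have happ : ∀ i j, C j i = C i j := fun i j => congrFun (congrFun hCsym i) j
  have htr : M.trace = ∑ i, ∑ j, (C i j)^2 := by
    rw [← hCC, trace]
    refine Finset.sum_congr rfl fun i _ => ?_
    rw [diag, mul_apply]
    refine Finset.sum_congr rfl fun j _ => ?_
    rw [happ i j, pow_two]
  rw [hquad, htr, Finset.sum_mul]
  apply Finset.sum_le_sum
  intro i _
  simpa [dotProduct, sq] using
    Finset.sum_mul_sq_le_sq_mul_sq Finset.univ (fun j => C i j) (fun j => x j)

lemma dot_mulVec_mulVec {ι : Type*} [Fintype ι] (A B : Matrix ι ι ℝ) (u : ι → ℝ) :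
    (A *ᵥ u) ⬝ᵥ (B *ᵥ u) = ((Bᵀ * A) *ᵥ u) ⬝ᵥ u := by
  conv_lhs => rw [dotProduct_mulVec, ← mulVec_transpose, mulVec_mulVec]

/-- the stretch inequality `L_G ⪯ st_H(G) · L_H` with
`st_H(G) = Tr(L_H⁺ L_G)`. -/
theorem stretch_matrix_inequality
    {n : ℕ} (hn : 0 < n) (LG LH PH : Matrix (Fin n) (Fin n) ℝ)
    (hG : IsConnLaplacian LG) (hH : IsConnLaplacian LH)
    (hPH : IsMoorePenrose LH PH) :
    ((PH * LG).trace • LH - LG).PosSemidef := by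
  obtain ⟨hGsym, hGoff, hGrow, hGker⟩ := hG
  obtain ⟨hHsym, hHoff, hHrow, hHker⟩ := hH
  have hHsym' : LHᵀ = LH := hHsym
  have hGsym' : LGᵀ = LG := hGsym
  have hPsym : PHᵀ = PH := moorePenrose_symm hHsym' hPH
  -- LG and LH are PSD
  have hLGpsd : LG.PosSemidef := by
    refine .of_dotProduct_mulVec_nonneg (by rwa [IsHermitian, conjTranspose_eq_transpose_of_trivial]) fun x => ?_
    simpa using laplacian_quad_nonneg hGsym hGoff hGrow x
  have hLHpsd : LH.PosSemidef := by
    refine .of_dotProduct_mulVec_nonneg (by rwa [IsHermitian, conjTranspose_eq_transpose_of_trivial]) fun x => ?_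
    simpa using laplacian_quad_nonneg hHsym hHoff hHrow x
  -- PH is PSD
  have hPHpsd : PH.PosSemidef := by
    have : (PHᴴ * LH * PH).PosSemidef := hLHpsd.conjTranspose_mul_mul_same PH
    rwa [conjTranspose_eq_transpose_of_trivial, hPsym, hPH.2.1] at this
  open scoped MatrixOrder in set R := CFC.sqrt PH with hRdef
  have hRR : R * R = PH := by
    open scoped MatrixOrder in exact CFC.sqrt_mul_sqrt_self PH hPHpsd.nonneg
  have hRsym : Rᵀ = R := by
    have : R.IsHermitian := by
      open scoped MatrixOrder in exact (CFC.sqrt_nonneg PH).posSemidef.isHermitian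
    rwa [IsHermitian, conjTranspose_eq_transpose_of_trivial] at this
  -- the conjugated matrix and its trace
  have hSpsd : (R * LG * R).PosSemidef := by
    have : (Rᴴ * LG * R).PosSemidef := hLGpsd.conjTranspose_mul_mul_same R
    rwa [conjTranspose_eq_transpose_of_trivial, hRsym] at this
  have htr : (R * LG * R).trace = (PH * LG).trace := by
    rw [trace_mul_comm (R * LG) R, ← mul_assoc, hRR]
  refine .of_dotProduct_mulVec_nonneg ?_ ?_
  · rw [IsHermitian, conjTranspose_eq_transpose_of_trivial, transpose_sub, transpose_smul,
      hHsym', hGsym']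
  intro x
  simp only [star_trivial, sub_mulVec, smul_mulVec, dotProduct_sub, dotProduct_smul,
    smul_eq_mul, sub_nonneg]
  have hLPL : LH * PH * LH = LH := hPH.1
  obtain ⟨c, hc⟩ : ∃ c : ℝ, x - PH *ᵥ (LH *ᵥ x) = fun _ => c := by
    apply (hHker _).mp
    rw [mulVec_sub, mulVec_mulVec, mulVec_mulVec, hLPL, sub_self]
  have hxy : x = (PH *ᵥ (LH *ᵥ x)) + fun _ => c := by
    funext i
    have h := congrFun hc i
    simp only [Pi.sub_apply] at h
    simp only [Pi.add_apply]
    linarith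
  have hGconst : LG *ᵥ (fun _ => c) = 0 := (hGker _).mpr ⟨c, rfl⟩
  have hHconst : LH *ᵥ (fun _ => c) = 0 := (hHker _).mpr ⟨c, rfl⟩
  have hconstdotG : ∀ v : Fin n → ℝ, (fun _ => c) ⬝ᵥ LG *ᵥ v = 0 := fun v => by
    rw [dotProduct_mulVec, ← mulVec_transpose, hGsym', hGconst, zero_dotProduct]
  have hconstdotH : ∀ v : Fin n → ℝ, (fun _ => c) ⬝ᵥ LH *ᵥ v = 0 := fun v => by
    rw [dotProduct_mulVec, ← mulVec_transpose, hHsym', hHconst, zero_dotProduct]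
  have hGquad : x ⬝ᵥ LG *ᵥ x = (PH *ᵥ (LH *ᵥ x)) ⬝ᵥ LG *ᵥ (PH *ᵥ (LH *ᵥ x)) := by
    conv_lhs => rw [hxy]
    rw [mulVec_add, hGconst, add_zero, add_dotProduct, hconstdotG, add_zero]
  have hHquad : x ⬝ᵥ LH *ᵥ x = (R *ᵥ (LH *ᵥ x)) ⬝ᵥ (R *ᵥ (LH *ᵥ x)) := by
    have hrhs : (R *ᵥ (LH *ᵥ x)) ⬝ᵥ (R *ᵥ (LH *ᵥ x)) = (PH *ᵥ (LH *ᵥ x)) ⬝ᵥ (LH *ᵥ x) := by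
      rw [dot_mulVec_mulVec, hRsym, hRR]
    have hproj : LH *ᵥ (PH *ᵥ (LH *ᵥ x)) = LH *ᵥ x := by
      rw [mulVec_mulVec, mulVec_mulVec, hLPL]
    have hlhs : x ⬝ᵥ LH *ᵥ x = (PH *ᵥ (LH *ᵥ x)) ⬝ᵥ (LH *ᵥ x) := by
      conv_lhs => rw [hxy]
      rw [mulVec_add, hHconst, add_zero, add_dotProduct, hconstdotH, add_zero, hproj]
    rw [hlhs, hrhs]
  have hGy : (PH *ᵥ (LH *ᵥ x)) ⬝ᵥ LG *ᵥ (PH *ᵥ (LH *ᵥ x)) =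
      (R *ᵥ (LH *ᵥ x)) ⬝ᵥ (R * LG * R) *ᵥ (R *ᵥ (LH *ᵥ x)) := by
    have l1 : LG *ᵥ (PH *ᵥ (LH *ᵥ x)) = (LG * PH) *ᵥ (LH *ᵥ x) := mulVec_mulVec _ _ _
    have l2 : (R * LG * R) *ᵥ (R *ᵥ (LH *ᵥ x)) = ((R * LG * R) * R) *ᵥ (LH *ᵥ x) :=
      mulVec_mulVec _ _ _
    rw [l1, l2, dot_mulVec_mulVec, dot_mulVec_mulVec]
    have hmat2 : (LG * PH)ᵀ * PH = PH * LG * PH := by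
      rw [transpose_mul, hPsym, hGsym']
    have hmat : ((R * LG * R) * R)ᵀ * R = PH * LG * PH := by
      have h1 : ((R * LG * R) * R)ᵀ = R * (R * LG * R) := by
        simp [transpose_mul, hRsym, hGsym', mul_assoc]
      rw [h1, show R * (R * LG * R) * R = (R * R) * LG * (R * R) from by noncomm_ring, hRR]
    rw [hmat, hmat2]
  have hbound := quad_le_trace_mul hSpsd (R *ᵥ (LH *ᵥ x))
  rw [htr] at hbound
  calc x ⬝ᵥ LG *ᵥ x = (R *ᵥ (LH *ᵥ x)) ⬝ᵥ (R * LG * R) *ᵥ (R *ᵥ (LH *ᵥ x)) := by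
        rw [hGquad, hGy]
  _ ≤ (PH * LG).trace * ((R *ᵥ (LH *ᵥ x)) ⬝ᵥ (R *ᵥ (LH *ᵥ x))) := hbound
  _ = (PH * LG).trace * (x ⬝ᵥ LH *ᵥ x) := by rw [hHquad]
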